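/- Let (π^n) be a sequence of partitions, S a continuous real path with mesh m(S, π^n[0,t]) → 0 for all t, and suppose the discrete local times L_t^{π^n}(S,·) converge uniformly on ℝ to a limit L_t(S,·) for each t, with (t,u) ↦ L_t(S,u) jointly continuous. Let f : ℝ → ℝ be absolutely continuous with right-continuous derivative f′ of locally bounded variation. Then for every t ≥ 0 the Riemann sums ∑_{t_j ∈ π^n} f′(S(t_j))(S(t_{j+1}∧t) − S(t_j∧t)) converge as n → ∞, and the limit ∫_0^t f′(S(s)) dS(s) satisfies f(S(t)) = f(S(0)) + ∫_0^t f′(S(s)) dS(s) + ∫_ℝ L_t(u) df′(u). -/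

import Mathlib

open Set MeasureTheory Filter Classical

/-- `⦇a,b⦈` : the half-open interval `(a,b]` if `a ≤ b`, and `(b,a]` otherwise. -/
noncomputable def hook (a b : ℝ) : Set ℝ := if a ≤ b then Set.Ioc a b else Set.Ioc b a

/-- The discrete local time of a path `S` along the partition `τ` at time `t` and level `u`. -/
noncomputable def discreteLocalTime (S : ℝ → ℝ) (τ : ℕ → ℝ) (t u : ℝ) : ℝ :=
  ∑' j : ℕ, if u ∈ hook (S (min (τ j) t)) (S (min (τ (j + 1)) t))
            then |S (min (τ (j + 1)) t) - u| else 0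


lemma fubini_le (μ : Measure ℝ) [IsLocallyFiniteMeasure μ] (a b : ℝ) :
    ∫⁻ u in Ioc a b, μ (Ioc a u) = ∫⁻ v in Ioc a b, ENNReal.ofReal (b - v) ∂μ := by
  have h1 : MeasurableSet {p : ℝ × ℝ | p.2 ≤ p.1} := measurableSet_le measurable_snd measurable_fst
  have key := ((volume.restrict (Ioc a b)).prod_apply (ν := μ.restrict (Ioc a b)) h1)
  rw [Measure.prod_apply_symm h1] at key
  have e1 : ∫⁻ u in Ioc a b, (μ.restrict (Ioc a b)) (Prod.mk u ⁻¹' {p : ℝ × ℝ | p.2 ≤ p.1})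
      = ∫⁻ u in Ioc a b, μ (Ioc a u) := by
    refine setLIntegral_congr_fun measurableSet_Ioc ?_
    intro u hu
    beta_reduce
    have : Prod.mk u ⁻¹' {p : ℝ × ℝ | p.2 ≤ p.1} = Iic u := rfl
    rw [this, Measure.restrict_apply measurableSet_Iic]
    congr 1
    ext v
    simp only [mem_inter_iff, mem_Iic, mem_Ioc]
    constructor
    · rintro ⟨h1, h2, h3⟩; exact ⟨h2, h1⟩
    · rintro ⟨h2, h1⟩; exact ⟨h1, h2, h1.trans hu.2⟩
  have e2 : ∫⁻ v in Ioc a b, (volume.restrict (Ioc a b)) ((fun u => (u, v)) ⁻¹' {p : ℝ × ℝ | p.2 ≤ p.1})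
      ∂μ = ∫⁻ v in Ioc a b, ENNReal.ofReal (b - v) ∂μ := by
    refine setLIntegral_congr_fun measurableSet_Ioc ?_
    intro v hv
    beta_reduce
    have : (fun u => (u, v)) ⁻¹' {p : ℝ × ℝ | p.2 ≤ p.1} = Ici v := rfl
    rw [this, Measure.restrict_apply measurableSet_Ici]
    have : Ici v ∩ Ioc a b = Icc v b := by
      ext u
      simp only [mem_inter_iff, mem_Ici, mem_Ioc, mem_Icc]
      constructor
      · rintro ⟨h1, h2, h3⟩; exact ⟨h1, h3⟩
      · rintro ⟨h1, h2⟩; exact ⟨h1, hv.1.trans_le h1, h2⟩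
    rw [this, Real.volume_Icc]
  rw [e1, e2] at key
  exact key.symm

lemma fubini_ge (μ : Measure ℝ) [IsLocallyFiniteMeasure μ] (a b : ℝ) :
    ∫⁻ u in Ioc b a, μ (Ioc u a) = ∫⁻ v in Ioc b a, ENNReal.ofReal (v - b) ∂μ := by
  have h1 : MeasurableSet {p : ℝ × ℝ | p.1 < p.2} := measurableSet_lt measurable_fst measurable_snd
  have key := ((volume.restrict (Ioc b a)).prod_apply (ν := μ.restrict (Ioc b a)) h1)
  rw [Measure.prod_apply_symm h1] at key
  have e1 : ∫⁻ u in Ioc b a, (μ.restrict (Ioc b a)) (Prod.mk u ⁻¹' {p : ℝ × ℝ | p.1 < p.2})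
      = ∫⁻ u in Ioc b a, μ (Ioc u a) := by
    refine setLIntegral_congr_fun measurableSet_Ioc ?_
    intro u hu
    beta_reduce
    have : Prod.mk u ⁻¹' {p : ℝ × ℝ | p.1 < p.2} = Ioi u := rfl
    rw [this, Measure.restrict_apply measurableSet_Ioi]
    congr 1
    ext v
    simp only [mem_inter_iff, mem_Ioi, mem_Ioc]
    constructor
    · rintro ⟨h1, h2, h3⟩; exact ⟨h1, h3⟩
    · rintro ⟨h1, h3⟩; exact ⟨h1, hu.1.trans h1, h3⟩
  have e2 : ∫⁻ v in Ioc b a, (volume.restrict (Ioc b a)) ((fun u => (u, v)) ⁻¹' {p : ℝ × ℝ | p.1 < p.2})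
      ∂μ = ∫⁻ v in Ioc b a, ENNReal.ofReal (v - b) ∂μ := by
    refine setLIntegral_congr_fun measurableSet_Ioc ?_
    intro v hv
    beta_reduce
    have : (fun u => (u, v)) ⁻¹' {p : ℝ × ℝ | p.1 < p.2} = Iio v := rfl
    rw [this, Measure.restrict_apply measurableSet_Iio]
    have : Iio v ∩ Ioc b a = Ioo b v := by
      ext u
      simp only [mem_inter_iff, mem_Iio, mem_Ioc, mem_Ioo]
      constructor
      · rintro ⟨h1, h2, h3⟩; exact ⟨h2, h1⟩
      · rintro ⟨h2, h1⟩; exact ⟨h1, h2, le_trans h1.le hv.2⟩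
    rw [this, Real.volume_Ioo]
  rw [e1, e2] at key
  exact key.symm


lemma key_le (g : StieltjesFunction ℝ) (a b : ℝ) :
    ∫ u in Ioc a b, (g u - g a) = ∫ v in Ioc a b, (b - v) ∂g.measure := by
  have hmg : Measurable fun u => g u - g a := (g.mono.measurable).sub measurable_const
  have hL : ∫ u in Ioc a b, (g u - g a)
      = (∫⁻ u in Ioc a b, ENNReal.ofReal (g u - g a)).toReal := by
    refine integral_eq_lintegral_of_nonneg_ae ?_ hmg.aestronglyMeasurable
    refine (ae_restrict_iff' measurableSet_Ioc).2 (Filter.Eventually.of_forall ?_)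
    intro u hu
    exact sub_nonneg.2 (g.mono hu.1.le)
  have hR : ∫ v in Ioc a b, (b - v) ∂g.measure
      = (∫⁻ v in Ioc a b, ENNReal.ofReal (b - v) ∂g.measure).toReal := by
    refine integral_eq_lintegral_of_nonneg_ae ?_
      (measurable_const.sub measurable_id).aestronglyMeasurable
    refine (ae_restrict_iff' measurableSet_Ioc).2 (Filter.Eventually.of_forall ?_)
    intro v hv
    exact sub_nonneg.2 hv.2
  rw [hL, hR]
  congr 1
  rw [← fubini_le g.measure a b]
  refine setLIntegral_congr_fun measurableSet_Ioc ?_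
  intro u _
  exact (g.measure_Ioc a u).symm

lemma key_ge (g : StieltjesFunction ℝ) (a b : ℝ) :
    ∫ u in Ioc b a, (g a - g u) = ∫ v in Ioc b a, (v - b) ∂g.measure := by
  have hmg : Measurable fun u => g a - g u := measurable_const.sub g.mono.measurable
  have hL : ∫ u in Ioc b a, (g a - g u)
      = (∫⁻ u in Ioc b a, ENNReal.ofReal (g a - g u)).toReal := by
    refine integral_eq_lintegral_of_nonneg_ae ?_ hmg.aestronglyMeasurable
    refine (ae_restrict_iff' measurableSet_Ioc).2 (Filter.Eventually.of_forall ?_)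
    intro u hu
    exact sub_nonneg.2 (g.mono hu.2)
  have hR : ∫ v in Ioc b a, (v - b) ∂g.measure
      = (∫⁻ v in Ioc b a, ENNReal.ofReal (v - b) ∂g.measure).toReal := by
    refine integral_eq_lintegral_of_nonneg_ae ?_
      (measurable_id.sub measurable_const).aestronglyMeasurable
    refine (ae_restrict_iff' measurableSet_Ioc).2 (Filter.Eventually.of_forall ?_)
    intro v hv
    exact sub_nonneg.2 hv.1.le
  rw [hL, hR]
  congr 1
  rw [← fubini_ge g.measure a b]
  refine setLIntegral_congr_fun measurableSet_Ioc ?_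
  intro u _
  exact (g.measure_Ioc u a).symm

lemma step (g h : StieltjesFunction ℝ) (f' f : ℝ → ℝ) (hf' : ∀ x, f' x = g x - h x)
    (hf : ∀ x, f x = if 0 ≤ x then ∫ y in Set.Ioc 0 x, f' y else -∫ y in Set.Ioc x 0, f' y)
    (a b : ℝ) :
    f b - f a = f' a * (b - a)
      + ((∫ u in hook a b, |b - u| ∂g.measure) - ∫ u in hook a b, |b - u| ∂h.measure) := by
  have hf'eq : f' = fun x => g x - h x := funext hf'
  have f'int : ∀ c d : ℝ, IntervalIntegrable f' volume c d := by
    intro c d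
    rw [hf'eq]
    exact (g.mono.intervalIntegrable).sub (h.mono.intervalIntegrable)
  have hfF : ∀ x, f x = ∫ y in (0:ℝ)..x, f' y := by
    intro x
    rw [hf]
    split_ifs with hx
    · exact (intervalIntegral.integral_of_le hx).symm
    · rw [intervalIntegral.integral_symm]
      rw [intervalIntegral.integral_of_le (le_of_not_ge hx)]
  have fdiff : f b - f a = ∫ y in a..b, f' y := by
    rw [hfF, hfF]
    exact intervalIntegral.integral_interval_sub_left (f'int 0 b) (f'int 0 a)
  have vol_lt : ∀ c d : ℝ, volume (Ioc c d) < ⊤ := by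
    intro c d; rw [Real.volume_Ioc]; exact ENNReal.ofReal_lt_top
  have gint : ∀ (k : StieltjesFunction ℝ) (c d : ℝ),
      IntegrableOn (fun u => k u - k c) (Ioc c d) volume := by
    intro k c d
    rcases le_or_gt c d with hcd | hcd
    · exact ((intervalIntegrable_iff_integrableOn_Ioc_of_le hcd).1
        (k.mono.intervalIntegrable)).sub (integrableOn_const (vol_lt c d).ne)
    · rw [Ioc_eq_empty (not_lt.2 hcd.le)]; simp
  have gint' : ∀ (k : StieltjesFunction ℝ) (c d : ℝ),
      IntegrableOn (fun u => k c - k u) (Ioc d c) volume := by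
    intro k c d
    rcases le_or_gt d c with hcd | hcd
    · exact (integrableOn_const (vol_lt d c).ne).sub
        ((intervalIntegrable_iff_integrableOn_Ioc_of_le hcd).1 (k.mono.intervalIntegrable))
    · rw [Ioc_eq_empty (not_lt.2 hcd.le)]; simp
  rcases le_or_gt a b with hab | hab
  · -- a ≤ b
    have hhk : hook a b = Ioc a b := if_pos hab
    have h1 : f b - f a = ∫ u in Ioc a b, f' u := by
      rw [fdiff, intervalIntegral.integral_of_le hab]
    have hconst : ∫ u in Ioc a b, (f' a : ℝ) = f' a * (b - a) := by
      rw [setIntegral_const, Real.volume_real_Ioc, max_eq_left (sub_nonneg.2 hab),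
        smul_eq_mul, mul_comm]
    have hint : IntegrableOn f' (Ioc a b) volume :=
      (intervalIntegrable_iff_integrableOn_Ioc_of_le hab).1 (f'int a b)
    have h2 : ∫ u in Ioc a b, (f' u - f' a) = (f b - f a) - f' a * (b - a) := by
      rw [integral_sub hint (integrableOn_const (vol_lt a b).ne), hconst, h1]
    have h3 : ∫ u in Ioc a b, (f' u - f' a)
        = (∫ u in Ioc a b, (g u - g a)) - ∫ u in Ioc a b, (h u - h a) := by
      rw [← integral_sub (gint g a b) (gint h a b)]
      refine setIntegral_congr_fun measurableSet_Ioc ?_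
      intro u _
      simp only [hf']
      ring
    have h4 : ∀ (k : StieltjesFunction ℝ),
        ∫ u in hook a b, |b - u| ∂k.measure = ∫ u in Ioc a b, (b - u) ∂k.measure := by
      intro k
      rw [hhk]
      refine setIntegral_congr_fun measurableSet_Ioc ?_
      intro u hu
      exact abs_of_nonneg (sub_nonneg.2 hu.2)
    rw [h4 g, h4 h, ← key_le g a b, ← key_le h a b, ← h3, h2]
    ring
  · -- b < a
    have hhk : hook a b = Ioc b a := if_neg (not_le.2 hab)
    have h1 : f b - f a = -∫ u in Ioc b a, f' u := by
      rw [fdiff, intervalIntegral.integral_symm, intervalIntegral.integral_of_le hab.le]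
    have hconst : ∫ u in Ioc b a, (f' a : ℝ) = f' a * (a - b) := by
      rw [setIntegral_const, Real.volume_real_Ioc, max_eq_left (sub_nonneg.2 hab.le),
        smul_eq_mul, mul_comm]
    have hint : IntegrableOn f' (Ioc b a) volume :=
      (intervalIntegrable_iff_integrableOn_Ioc_of_le hab.le).1 (f'int b a)
    have h2 : ∫ u in Ioc b a, (f' a - f' u) = (f b - f a) - f' a * (b - a) := by
      rw [integral_sub (integrableOn_const (C := f' a) (vol_lt b a).ne) hint, hconst]
      rw [h1]
      ring
    have h3 : ∫ u in Ioc b a, (f' a - f' u)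
        = (∫ u in Ioc b a, (g a - g u)) - ∫ u in Ioc b a, (h a - h u) := by
      rw [← integral_sub (gint' g a b) (gint' h a b)]
      refine setIntegral_congr_fun measurableSet_Ioc ?_
      intro u _
      simp only [hf']
      ring
    have h4 : ∀ (k : StieltjesFunction ℝ),
        ∫ u in hook a b, |b - u| ∂k.measure = ∫ u in Ioc b a, (u - b) ∂k.measure := by
      intro k
      rw [hhk]
      refine setIntegral_congr_fun measurableSet_Ioc ?_
      intro u hu
      show |b - u| = u - b
      rw [abs_of_nonpos (sub_nonpos.2 hu.1.le), neg_sub]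
    rw [h4 g, h4 h, ← key_ge g a b, ← key_ge h a b, ← h3, h2]
    ring

lemma hook_measurableSet (c d : ℝ) : MeasurableSet (hook c d) := by
  unfold hook; split_ifs <;> exact measurableSet_Ioc

lemma hook_subset {lo hi c d : ℝ} (hc : c ∈ Icc lo hi) (hd : d ∈ Icc lo hi) :
    hook c d ⊆ Icc lo hi := by
  intro u hu
  unfold hook at hu
  split_ifs at hu with hcd
  · exact ⟨hc.1.trans hu.1.le, hu.2.trans hd.2⟩
  · exact ⟨hd.1.trans hu.1.le, hu.2.trans hc.2⟩

lemma hook_self (c : ℝ) : hook c c = ∅ := by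
  unfold hook; rw [if_pos le_rfl, Ioc_self]

lemma phi_integrable (k : StieltjesFunction ℝ) (c d : ℝ) :
    Integrable (fun u => if u ∈ hook c d then |d - u| else 0) k.measure := by
  have : (fun u => if u ∈ hook c d then |d - u| else 0)
      = (hook c d).indicator (fun u => |d - u|) := by
    funext u; rw [Set.indicator_apply]
  rw [this, integrable_indicator_iff (hook_measurableSet c d)]
  have hc : Continuous fun u : ℝ => |d - u| := (continuous_const.sub continuous_id).abs
  unfold hook
  split_ifs <;> exact hc.integrableOn_Ioc

lemma D_eq_sum (x : ℕ → ℝ) (N : ℕ) (hxN : ∀ j, N ≤ j → x j = x N) (u : ℝ) :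
    (∑' j : ℕ, if u ∈ hook (x j) (x (j + 1)) then |x (j + 1) - u| else 0)
      = ∑ j ∈ Finset.range N, (if u ∈ hook (x j) (x (j + 1)) then |x (j + 1) - u| else 0) := by
  refine tsum_eq_sum ?_
  intro j hj
  have hNj : N ≤ j := Nat.le_of_not_lt (fun hc => hj (Finset.mem_range.2 hc))
  rw [hxN j hNj, hxN (j + 1) (hNj.trans (Nat.le_succ j)), hook_self]
  simp

lemma D_integrable (k : StieltjesFunction ℝ) (x : ℕ → ℝ) (N : ℕ)
    (hxN : ∀ j, N ≤ j → x j = x N) :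
    Integrable (fun u => ∑' j : ℕ,
      if u ∈ hook (x j) (x (j + 1)) then |x (j + 1) - u| else 0) k.measure := by
  have : (fun u => ∑' j : ℕ, if u ∈ hook (x j) (x (j + 1)) then |x (j + 1) - u| else 0)
      = fun u => ∑ j ∈ Finset.range N, (if u ∈ hook (x j) (x (j + 1)) then |x (j + 1) - u| else 0) :=
    funext (D_eq_sum x N hxN)
  rw [this]
  exact integrable_finset_sum _ fun j _ => phi_integrable k _ _

lemma D_integral (k : StieltjesFunction ℝ) (x : ℕ → ℝ) (N : ℕ)
    (hxN : ∀ j, N ≤ j → x j = x N) :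
    ∫ u, (∑' j : ℕ, if u ∈ hook (x j) (x (j + 1)) then |x (j + 1) - u| else 0) ∂k.measure
      = ∑ j ∈ Finset.range N, ∫ u in hook (x j) (x (j + 1)), |x (j + 1) - u| ∂k.measure := by
  have h1 : (fun u => ∑' j : ℕ, if u ∈ hook (x j) (x (j + 1)) then |x (j + 1) - u| else 0)
      = fun u => ∑ j ∈ Finset.range N,
          (if u ∈ hook (x j) (x (j + 1)) then |x (j + 1) - u| else 0) :=
    funext (D_eq_sum x N hxN)
  rw [h1, integral_finset_sum _ fun j _ => phi_integrable k _ _]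
  refine Finset.sum_congr rfl fun j _ => ?_
  rw [← integral_indicator (hook_measurableSet _ _)]
  simp [Set.indicator_apply]

lemma telescope_aux (g h : StieltjesFunction ℝ) (f' f : ℝ → ℝ)
    (hf' : ∀ x, f' x = g x - h x)
    (hf : ∀ x, f x = if 0 ≤ x then ∫ y in Set.Ioc 0 x, f' y else -∫ y in Set.Ioc x 0, f' y)
    (x : ℕ → ℝ) (N : ℕ) (hxN : ∀ j, N ≤ j → x j = x N) :
    (∑' j : ℕ, f' (x j) * (x (j + 1) - x j))
      = f (x N) - f (x 0)
        - ((∫ u, (∑' j : ℕ, if u ∈ hook (x j) (x (j + 1)) then |x (j + 1) - u| else 0)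
              ∂g.measure)
           - ∫ u, (∑' j : ℕ, if u ∈ hook (x j) (x (j + 1)) then |x (j + 1) - u| else 0)
              ∂h.measure) := by
  have hR : (∑' j : ℕ, f' (x j) * (x (j + 1) - x j))
      = ∑ j ∈ Finset.range N, f' (x j) * (x (j + 1) - x j) := by
    refine tsum_eq_sum ?_
    intro j hj
    have hNj : N ≤ j := Nat.le_of_not_lt (fun hc => hj (Finset.mem_range.2 hc))
    rw [hxN j hNj, hxN (j + 1) (hNj.trans (Nat.le_succ j)), sub_self, mul_zero]
  have htel : ∑ j ∈ Finset.range N, (f (x (j + 1)) - f (x j)) = f (x N) - f (x 0) :=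
    Finset.sum_range_sub (fun j => f (x j)) N
  have hstep : ∀ j, f (x (j + 1)) - f (x j)
      = f' (x j) * (x (j + 1) - x j)
        + ((∫ u in hook (x j) (x (j + 1)), |x (j + 1) - u| ∂g.measure)
            - ∫ u in hook (x j) (x (j + 1)), |x (j + 1) - u| ∂h.measure) :=
    fun j => step g h f' f hf' hf (x j) (x (j + 1))
  have hsum : f (x N) - f (x 0)
      = (∑ j ∈ Finset.range N, f' (x j) * (x (j + 1) - x j))
        + ((∑ j ∈ Finset.range N, ∫ u in hook (x j) (x (j + 1)), |x (j + 1) - u| ∂g.measure)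
           - ∑ j ∈ Finset.range N, ∫ u in hook (x j) (x (j + 1)), |x (j + 1) - u| ∂h.measure) := by
    rw [← htel]
    rw [Finset.sum_congr rfl fun j _ => hstep j]
    rw [Finset.sum_add_distrib, Finset.sum_sub_distrib]
  rw [hR, D_integral g x N hxN, D_integral h x N hxN, hsum]
  ring

/-- Pathwise generalized Itô (Tanaka) formula for paths with a continuous local time:
if the discrete local times along `(π^n)` converge uniformly to a jointly continuous limit
`L`, and `f` is absolutely continuous with right-continuous derivative `f' = g - h` of
locally bounded variation (`g, h` Stieltjes functions, `df' = dg - dh`), then the Riemann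
sums of `f'(S)` along `(π^n)` converge, and the limit `∫_0^t f'(S) dS` satisfies
`f(S(t)) = f(S(0)) + ∫_0^t f'(S(s)) dS(s) + ∫_ℝ L_t(u) df'(u)`. -/
theorem pathwise_generalized_ito
    (S : ℝ → ℝ) (hS : Continuous S)
    (π : ℕ → ℕ → ℝ)
    (hπ0 : ∀ n, π n 0 = 0) (hπmono : ∀ n, StrictMono (π n))
    (hπtop : ∀ n, Tendsto (π n) atTop atTop)
    (hmesh : ∀ t : ℝ, 0 ≤ t →
      Tendsto (fun n => ⨆ j : ℕ, |S (min (π n (j + 1)) t) - S (min (π n j) t)|)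
        atTop (nhds 0))
    (L : ℝ → ℝ → ℝ)
    (hLconv : ∀ t : ℝ, 0 ≤ t →
      TendstoUniformly (fun n u => discreteLocalTime S (π n) t u) (L t) atTop)
    (hLcont : Continuous fun p : ℝ × ℝ => L p.1 p.2)
    (g h : StieltjesFunction ℝ) (f' f : ℝ → ℝ)
    (hf' : ∀ x, f' x = g x - h x)
    (hf : ∀ x, f x = if 0 ≤ x then ∫ y in Set.Ioc 0 x, f' y else -∫ y in Set.Ioc x 0, f' y)
    (t : ℝ) (ht : 0 ≤ t) :
    ∃ I : ℝ,
      Tendsto (fun n =>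
          ∑' j : ℕ, f' (S (min (π n j) t)) * (S (min (π n (j + 1)) t) - S (min (π n j) t)))
        atTop (nhds I) ∧
      f (S t) = f (S 0) + I
        + ((∫ u, L t u ∂g.measure) - ∫ u, L t u ∂h.measure) := by
  classical
  have hK : IsCompact (S '' Icc 0 t) := isCompact_Icc.image hS
  set c₀ := sInf (S '' Icc 0 t) with hc₀
  set c₁ := sSup (S '' Icc 0 t) with hc₁
  have hmemK : ∀ y ∈ S '' Icc 0 t, y ∈ Icc c₀ c₁ := fun y hy =>
    ⟨csInf_le hK.bddBelow hy, le_csSup hK.bddAbove hy⟩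
  have hπ0le : ∀ n j, 0 ≤ π n j := fun n j => by
    rw [← hπ0 n]; exact (hπmono n).monotone (Nat.zero_le j)
  have hxK : ∀ n j, S (min (π n j) t) ∈ Icc c₀ c₁ := fun n j =>
    hmemK _ (mem_image_of_mem S ⟨le_min (hπ0le n j) ht, min_le_right _ _⟩)
  have hNex : ∀ n, ∃ N : ℕ, ∀ j, N ≤ j → t ≤ π n j := by
    intro n
    rcases eventually_atTop.1 ((hπtop n).eventually_ge_atTop t) with ⟨N, hN⟩
    exact ⟨N, fun j hj => hN j hj⟩
  choose N hN using hNex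
  have hxN : ∀ n j, N n ≤ j → S (min (π n j) t) = S (min (π n (N n)) t) := by
    intro n j hj
    rw [min_eq_right (hN n j hj), min_eq_right (hN n (N n) le_rfl)]
  have hxNt : ∀ n, S (min (π n (N n)) t) = S t := fun n => by
    rw [min_eq_right (hN n (N n) le_rfl)]
  have hx0 : ∀ n, S (min (π n 0) t) = S 0 := fun n => by
    rw [hπ0, min_eq_left ht]
  have hDvanish : ∀ n u, u ∉ Icc c₀ c₁ → discreteLocalTime S (π n) t u = 0 := by
    intro n u hu
    unfold discreteLocalTime
    have hz : ∀ j : ℕ, (if u ∈ hook (S (min (π n j) t)) (S (min (π n (j + 1)) t))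
        then |S (min (π n (j + 1)) t) - u| else 0) = 0 := by
      intro j
      rw [if_neg]
      intro hmem
      exact hu (hook_subset (hxK n j) (hxK n (j + 1)) hmem)
    rw [tsum_congr hz, tsum_zero]
  have hLvanish : ∀ u, u ∉ Icc c₀ c₁ → L t u = 0 := by
    intro u hu
    have h1 : Tendsto (fun n => discreteLocalTime S (π n) t u) atTop (nhds (L t u)) :=
      (hLconv t ht).tendsto_at u
    have h2 : (fun n => discreteLocalTime S (π n) t u) = fun _ => (0 : ℝ) :=
      funext fun n => hDvanish n u hu
    rw [h2] at h1
    exact (tendsto_nhds_unique h1 tendsto_const_nhds)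
  have hLmeas : Continuous fun u => L t u := hLcont.comp (Continuous.prodMk_right t)
  have hLeq : (fun u => L t u) = (Icc c₀ c₁).indicator fun u => L t u := by
    funext u
    by_cases hu : u ∈ Icc c₀ c₁
    · rw [Set.indicator_of_mem hu]
    · rw [Set.indicator_of_notMem hu, hLvanish u hu]
  have hLint : ∀ k : StieltjesFunction ℝ, Integrable (fun u => L t u) k.measure := by
    intro k
    rw [hLeq, integrable_indicator_iff measurableSet_Icc]
    exact hLmeas.integrableOn_Icc
  have hDint : ∀ (k : StieltjesFunction ℝ) (n : ℕ),
      Integrable (fun u => discreteLocalTime S (π n) t u) k.measure := fun k n =>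
    D_integrable k (fun j => S (min (π n j) t)) (N n) (hxN n)
  have hconv : ∀ k : StieltjesFunction ℝ,
      Tendsto (fun n => ∫ u, discreteLocalTime S (π n) t u ∂k.measure) atTop
        (nhds (∫ u, L t u ∂k.measure)) := by
    intro k
    rw [Metric.tendsto_atTop]
    intro ε hε
    set C := (k.measure (Icc c₀ c₁)).toReal with hCdef
    have hCnn : (0 : ℝ) ≤ C := ENNReal.toReal_nonneg
    have hfin : k.measure (Icc c₀ c₁) < ⊤ := isCompact_Icc.measure_lt_top
    have hCpos : (0 : ℝ) < C + 1 := by linarith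
    have hε' : 0 < ε / (C + 1) := div_pos hε hCpos
    have huni := Metric.tendstoUniformly_iff.1 (hLconv t ht) (ε / (C + 1)) hε'
    rcases eventually_atTop.1 huni with ⟨n₀, hn₀⟩
    refine ⟨n₀, fun n hn => ?_⟩
    have hbound : ∀ u, ‖discreteLocalTime S (π n) t u - L t u‖ ≤ ε / (C + 1) := by
      intro u
      have := hn₀ n hn u
      rw [Real.dist_eq] at this
      rw [Real.norm_eq_abs, abs_sub_comm]
      exact this.le
    have hdiff_int := (hDint k n).sub (hLint k)
    have hvan : ∀ u ∉ Icc c₀ c₁, discreteLocalTime S (π n) t u - L t u = 0 := by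
      intro u hu
      rw [hDvanish n u hu, hLvanish u hu, sub_zero]
    have heq1 : ∫ u, (discreteLocalTime S (π n) t u - L t u) ∂k.measure
        = ∫ u in Icc c₀ c₁, (discreteLocalTime S (π n) t u - L t u) ∂k.measure :=
      (setIntegral_eq_integral_of_forall_compl_eq_zero hvan).symm
    have hle : ‖∫ u in Icc c₀ c₁, (discreteLocalTime S (π n) t u - L t u) ∂k.measure‖
        ≤ (ε / (C + 1)) * C := by
      refine norm_setIntegral_le_of_norm_le_const hfin (fun u _ => hbound u)
    rw [Real.dist_eq]
    have hsub : ∫ u, discreteLocalTime S (π n) t u ∂k.measure - ∫ u, L t u ∂k.measure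
        = ∫ u, (discreteLocalTime S (π n) t u - L t u) ∂k.measure :=
      (integral_sub (hDint k n) (hLint k)).symm
    rw [hsub, heq1]
    calc |∫ u in Icc c₀ c₁, (discreteLocalTime S (π n) t u - L t u) ∂k.measure|
        ≤ (ε / (C + 1)) * C := hle
      _ < (ε / (C + 1)) * (C + 1) := by
          exact mul_lt_mul_of_pos_left (lt_add_one C) hε'
      _ = ε := div_mul_cancel₀ ε (ne_of_gt hCpos)
  refine ⟨f (S t) - f (S 0) - ((∫ u, L t u ∂g.measure) - ∫ u, L t u ∂h.measure), ?_, by ring⟩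
  have hIdent : ∀ n,
      (∑' j : ℕ, f' (S (min (π n j) t)) * (S (min (π n (j + 1)) t) - S (min (π n j) t)))
        = f (S t) - f (S 0)
          - ((∫ u, discreteLocalTime S (π n) t u ∂g.measure)
             - ∫ u, discreteLocalTime S (π n) t u ∂h.measure) := by
    intro n
    have h0 := telescope_aux g h f' f hf' hf (fun j => S (min (π n j) t)) (N n) (hxN n)
    rw [hxNt n, hx0 n] at h0
    exact h0
  have hfunext : (fun n =>
      ∑' j : ℕ, f' (S (min (π n j) t)) * (S (min (π n (j + 1)) t) - S (min (π n j) t)))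
      = fun n => f (S t) - f (S 0)
          - ((∫ u, discreteLocalTime S (π n) t u ∂g.measure)
             - ∫ u, discreteLocalTime S (π n) t u ∂h.measure) := funext hIdent
  rw [hfunext]
  exact tendsto_const_nhds.sub ((hconv g).sub (hconv h))
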